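/- Let W, W_1, ..., W_K be i.i.d. real random variables whose distribution has an absolutely continuous part on an interval [c,d] with density bounded below by p > 0, and let δ̃ > 0 satisfy d − c − 4δ̃ > 0. Then P(W ∈ [c,d] and |W − W_i| > 2δ̃ for all i = 1, ..., K) ≥ (d−c) p^{K+1} (d−c−4δ̃)^K > 0. -/

import Mathlib

open MeasureTheory ProbabilityTheory Filter Set

/-- lower bound for the probability that `W` lands in `[c,d]` at distance
more than `2δ̃` from each of `W_1, …, W_K`. -/
theorem gap_probability_lower_bound
    {Ω : Type*} [MeasurableSpace Ω] (μ : Measure Ω) [IsProbabilityMeasure μ]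
    (K : ℕ) (V : Fin (K + 1) → Ω → ℝ) (c d p δt : ℝ)
    (hmeas : ∀ i, Measurable (V i))
    (hindep : iIndepFun V μ)
    (hident : ∀ i, Measure.map (V i) μ = Measure.map (V 0) μ)
    (hcd : c < d) (hp : 0 < p)
    (hdens : ∀ s : Set ℝ, MeasurableSet s → s ⊆ Icc c d →
      ENNReal.ofReal p * volume s ≤ Measure.map (V 0) μ s)
    (hδt : 0 < δt) (hgap : 0 < d - c - 4 * δt) :
    (d - c) * p ^ (K + 1) * (d - c - 4 * δt) ^ K ≤
      (μ {ω | V 0 ω ∈ Icc c d ∧ ∀ i : Fin K, 2 * δt < |V 0 ω - V i.succ ω|}).toReal ∧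
    0 < (μ {ω | V 0 ω ∈ Icc c d ∧ ∀ i : Fin K, 2 * δt < |V 0 ω - V i.succ ω|}).toReal := by
  have hm0 := hmeas 0
  set ν : Measure ℝ := Measure.map (V 0) μ with hν
  haveI : IsProbabilityMeasure ν := Measure.isProbabilityMeasure_map hm0.aemeasurable
  set π : Measure (Fin K → ℝ) := Measure.pi (fun _ => ν) with hπ
  haveI : IsProbabilityMeasure π := MeasureTheory.Measure.pi.instIsProbabilityMeasure _
  -- the event in the product space
  set E : Set (Fin (K + 1) → ℝ) :=
    {x | x 0 ∈ Icc c d ∧ ∀ i : Fin K, 2 * δt < |x 0 - x i.succ|} with hE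
  have hEmeas : MeasurableSet E := by
    have h1 : MeasurableSet {x : Fin (K + 1) → ℝ | x 0 ∈ Icc c d} :=
      (measurable_pi_apply 0) measurableSet_Icc
    have h2 : ∀ i : Fin K,
        MeasurableSet {x : Fin (K + 1) → ℝ | 2 * δt < |x 0 - x i.succ|} := fun i =>
      measurableSet_lt measurable_const
        (((measurable_pi_apply (0 : Fin (K + 1))).sub (measurable_pi_apply i.succ)).abs)
    have hEeq : E = {x : Fin (K + 1) → ℝ | x 0 ∈ Icc c d} ∩
        ⋂ i : Fin K, {x : Fin (K + 1) → ℝ | 2 * δt < |x 0 - x i.succ|} := by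
      ext x; simp [hE, Set.mem_iInter]
    rw [hEeq]
    exact h1.inter (MeasurableSet.iInter h2)
  -- the joint law is the product measure
  have hjoint : Measure.pi (fun _ : Fin (K + 1) => ν) = Measure.map (fun ω i => V i ω) μ := by
    refine Measure.pi_eq fun s hs => ?_
    rw [Measure.map_apply (measurable_pi_lambda _ hmeas) (MeasurableSet.univ_pi hs)]
    have hpre : (fun ω i => V i ω) ⁻¹' (Set.pi Set.univ s) = ⋂ i ∈ Finset.univ, V i ⁻¹' s i := by
      ext ω; simp [Set.mem_pi]
    rw [hpre, hindep.measure_inter_preimage_eq_mul Finset.univ (fun i _ => hs i)]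
    refine Finset.prod_congr rfl fun i _ => ?_
    rw [← Measure.map_apply (hmeas i) (hs i), hident i]
  have hμE : μ {ω | V 0 ω ∈ Icc c d ∧ ∀ i : Fin K, 2 * δt < |V 0 ω - V i.succ ω|}
      = Measure.pi (fun _ : Fin (K + 1) => ν) E := by
    rw [hjoint, Measure.map_apply (measurable_pi_lambda _ hmeas) hEmeas]
    rfl
  -- split off the first coordinate
  set F : Set (ℝ × (Fin K → ℝ)) :=
    {q | q.1 ∈ Icc c d ∧ ∀ i : Fin K, 2 * δt < |q.1 - q.2 i|} with hF
  have hFmeas : MeasurableSet F := by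
    have h1 : MeasurableSet {q : ℝ × (Fin K → ℝ) | q.1 ∈ Icc c d} :=
      measurable_fst measurableSet_Icc
    have h2 : ∀ i : Fin K, MeasurableSet {q : ℝ × (Fin K → ℝ) | 2 * δt < |q.1 - q.2 i|} :=
      fun i => measurableSet_lt measurable_const (by fun_prop)
    have hFeq : F = {q : ℝ × (Fin K → ℝ) | q.1 ∈ Icc c d} ∩
        ⋂ i : Fin K, {q : ℝ × (Fin K → ℝ) | 2 * δt < |q.1 - q.2 i|} := by
      ext q; simp [hF, Set.mem_iInter]
    rw [hFeq]
    exact h1.inter (MeasurableSet.iInter h2)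
  have hpiE : Measure.pi (fun _ : Fin (K + 1) => ν) E = (ν.prod π) F := by
    have hmp := measurePreserving_piFinSuccAbove (fun _ : Fin (K + 1) => ν) 0
    have hEF : E = (MeasurableEquiv.piFinSuccAbove (fun _ : Fin (K + 1) => ℝ) 0) ⁻¹' F := by
      ext x
      simp [hE, hF, MeasurableEquiv.piFinSuccAbove, Fin.succAbove_zero, Fin.tail]
    rw [hEF, hmp.measure_preimage_equiv]
  -- pointwise lower bound on each slice
  set C : ENNReal := ENNReal.ofReal (p * (d - c - 4 * δt)) with hC
  have hslice : ∀ x0 : ℝ, x0 ∈ Icc c d → C ^ K ≤ π (Prod.mk x0 ⁻¹' F) := by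
    intro x0 hx0
    have hset : Prod.mk x0 ⁻¹' F = Set.pi Set.univ (fun _ : Fin K => {t : ℝ | 2 * δt < |x0 - t|}) := by
      ext y
      simp [hF, Set.mem_pi, hx0.1, hx0.2]
    rw [hset, Measure.pi_pi]
    have hsubset : Icc c d \ Icc (x0 - 2 * δt) (x0 + 2 * δt) ⊆ {t : ℝ | 2 * δt < |x0 - t|} := by
      intro t ht
      simp only [Set.mem_setOf_eq]
      by_contra hcon
      push_neg at hcon
      rw [abs_sub_le_iff] at hcon
      exact ht.2 (Set.mem_Icc.2 ⟨by linarith [hcon.1, hcon.2], by linarith [hcon.1, hcon.2]⟩)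
    have hd1 : MeasurableSet (Icc c d \ Icc (x0 - 2 * δt) (x0 + 2 * δt)) :=
      measurableSet_Icc.diff measurableSet_Icc
    have hvol : ENNReal.ofReal (d - c - 4 * δt)
        ≤ volume (Icc c d \ Icc (x0 - 2 * δt) (x0 + 2 * δt)) := by
      have h1 : volume (Icc c d) - volume (Icc (x0 - 2 * δt) (x0 + 2 * δt))
          ≤ volume (Icc c d \ Icc (x0 - 2 * δt) (x0 + 2 * δt)) := le_measure_diff
      have h2 : volume (Icc c d) = ENNReal.ofReal (d - c) := Real.volume_Icc
      have h3 : volume (Icc (x0 - 2 * δt) (x0 + 2 * δt)) = ENNReal.ofReal (4 * δt) := by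
        rw [Real.volume_Icc]; ring_nf
      rw [h2, h3] at h1
      refine le_trans (le_of_eq ?_) h1
      rw [← ENNReal.ofReal_sub _ (by positivity)]
    have hν1 : C ≤ ν {t : ℝ | 2 * δt < |x0 - t|} := by
      calc C = ENNReal.ofReal p * ENNReal.ofReal (d - c - 4 * δt) := by
              rw [hC, ENNReal.ofReal_mul hp.le]
        _ ≤ ENNReal.ofReal p * volume (Icc c d \ Icc (x0 - 2 * δt) (x0 + 2 * δt)) := by
              exact mul_le_mul_right hvol _
        _ ≤ ν (Icc c d \ Icc (x0 - 2 * δt) (x0 + 2 * δt)) :=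
              hdens _ hd1 diff_subset
        _ ≤ ν {t : ℝ | 2 * δt < |x0 - t|} := measure_mono hsubset
    calc C ^ K ≤ ν {t : ℝ | 2 * δt < |x0 - t|} ^ K := pow_le_pow_left' hν1 K
      _ = ∏ _i : Fin K, ν {t : ℝ | 2 * δt < |x0 - t|} := by
          rw [Finset.prod_const, Finset.card_univ, Fintype.card_fin]
  -- lower bound the product measure of F
  have hprodF : C ^ K * (ENNReal.ofReal p * ENNReal.ofReal (d - c)) ≤ (ν.prod π) F := by
    rw [Measure.prod_apply hFmeas]
    have hIcc : ENNReal.ofReal p * ENNReal.ofReal (d - c) ≤ ν (Icc c d) := by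
      have := hdens (Icc c d) measurableSet_Icc subset_rfl
      rwa [Real.volume_Icc] at this
    calc C ^ K * (ENNReal.ofReal p * ENNReal.ofReal (d - c))
        ≤ C ^ K * ν (Icc c d) := mul_le_mul_right hIcc _
      _ = ∫⁻ x0, (Icc c d).indicator (fun _ => C ^ K) x0 ∂ν := by
          rw [lintegral_indicator measurableSet_Icc, setLIntegral_const, mul_comm]
      _ ≤ ∫⁻ x0, π (Prod.mk x0 ⁻¹' F) ∂ν := by
          refine lintegral_mono fun x0 => ?_
          by_cases hx0 : x0 ∈ Icc c d
          · rw [Set.indicator_of_mem hx0]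
            exact hslice x0 hx0
          · rw [Set.indicator_of_notMem hx0]
            exact zero_le
  -- put everything together
  set r : ℝ := (d - c) * p ^ (K + 1) * (d - c - 4 * δt) ^ K with hr
  have hrpos : 0 < r := by
    have : 0 < d - c := by linarith
    positivity
  have hfinal : ENNReal.ofReal r
      ≤ μ {ω | V 0 ω ∈ Icc c d ∧ ∀ i : Fin K, 2 * δt < |V 0 ω - V i.succ ω|} := by
    rw [hμE, hpiE]
    refine le_trans (le_of_eq ?_) hprodF
    rw [hC, ← ENNReal.ofReal_pow (by positivity), ← ENNReal.ofReal_mul (by positivity),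
      ← ENNReal.ofReal_mul (by positivity)]
    congr 1
    rw [hr, mul_pow]
    ring
  have hne : μ {ω | V 0 ω ∈ Icc c d ∧ ∀ i : Fin K, 2 * δt < |V 0 ω - V i.succ ω|} ≠ ⊤ :=
    measure_ne_top _ _
  have hle : r ≤ (μ {ω | V 0 ω ∈ Icc c d ∧ ∀ i : Fin K, 2 * δt < |V 0 ω - V i.succ ω|}).toReal :=
    (ENNReal.ofReal_le_iff_le_toReal hne).1 hfinal
  exact ⟨hle, lt_of_lt_of_le hrpos hle⟩
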